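/- Let X₁ and X₂ be finite connected CW complexes, let ω₁ and ω₂ be continuous closed 1-forms on X₁ and X₂ respectively, and let ω = p₁*ω₁ + p₂*ω₂ be the closed 1-form on X₁ × X₂ obtained by pulling back along the projections p₁, p₂ and adding. If cat(X₁, ω₁) = 0 then cat(X₁ × X₂, ω) = 0. -/

import Mathlib

open Set

/-- A continuous closed 1-form on a topological space `X`: a collection of
continuous real-valued functions `f i : U i → ℝ` indexed by an open cover
`{U i}` of `X`, such that on overlaps the differences `f i − f j` are locally
constant.  (The functions are recorded as total functions `X → ℝ`; only their
restrictions to `U i` matter.) -/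
structure ClosedOneForm (X : Type) [TopologicalSpace X] : Type 1 where
  ι : Type
  U : ι → Set X
  isOpen : ∀ i, IsOpen (U i)
  covers : ∀ x : X, ∃ i, x ∈ U i
  f : ι → X → ℝ
  cont : ∀ i, ContinuousOn (f i) (U i)
  locConst : ∀ i j, ∀ x ∈ U i ∩ U j, ∃ W, IsOpen W ∧ x ∈ W ∧
    ∀ y ∈ W ∩ (U i ∩ U j), f i y - f j y = f i x - f j x

namespace ClosedOneForm

variable {X Y : Type} [TopologicalSpace X] [TopologicalSpace Y]

/-- `r` is a value of the line integral `∫_γ ω` of the closed 1-form `ω` over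
the path `γ : [a,b] → X`: there is a partition `a = t₀ ≤ ⋯ ≤ t_n = b` with
`γ([t_m, t_{m+1}]) ⊆ U (idx m)` and
`r = Σ_m (f (idx m) (γ t_{m+1}) − f (idx m) (γ t_m))`. -/
def IsPathIntegral (ω : ClosedOneForm X) (γ : ℝ → X) (a b r : ℝ) : Prop :=
  ∃ (n : ℕ) (t : ℕ → ℝ) (idx : ℕ → ω.ι),
    t 0 = a ∧ t n = b ∧ (∀ m < n, t m ≤ t (m + 1)) ∧
    (∀ m < n, ∀ s ∈ Set.Icc (t m) (t (m + 1)), γ s ∈ ω.U (idx m)) ∧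
    r = ∑ m ∈ Finset.range n, (ω.f (idx m) (γ (t (m + 1))) - ω.f (idx m) (γ (t m)))

open scoped Classical in
/-- The line integral `∫_γ ω` over `γ : [a,b] → X` (its value is independent
of all choices; it is defined, via choice, as the common value computed from
any admissible partition). -/
noncomputable def pathIntegral (ω : ClosedOneForm X) (γ : ℝ → X) (a b : ℝ) : ℝ :=
  if h : ∃ r, ω.IsPathIntegral γ a b r then h.choose else 0

/-- A subset `A ⊆ X` is `N`-movable with respect to `ω` if there is a homotopy
`H : A × [0,1] → X` with `H(a,0) = a` and `∫_{t ↦ H(a,t)} ω ≤ −N` for all `a ∈ A`. -/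
def NMovable (ω : ClosedOneForm X) (A : Set X) (N : ℝ) : Prop :=
  ∃ H : X × ℝ → X, ContinuousOn H (A ×ˢ Set.Icc (0 : ℝ) 1) ∧
    (∀ a ∈ A, H (a, 0) = a) ∧
    ∀ a ∈ A, ω.pathIntegral (fun t => H (a, t)) 0 1 ≤ -N

end ClosedOneForm

/-- The inclusion of `V` into `X` is null-homotopic. -/
def NullhomotopicIn (X : Type) [TopologicalSpace X] (V : Set X) : Prop :=
  ∃ (H : X × ℝ → X) (x₀ : X), ContinuousOn H (V ×ˢ Set.Icc (0 : ℝ) 1) ∧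
    (∀ v ∈ V, H (v, 0) = v) ∧ (∀ v ∈ V, H (v, 1) = x₀)

/-- `cat_X(A) ≤ k`: the subset `A` can be covered by `k` open subsets of `X`,
each null-homotopic in `X`. -/
def CatLE (X : Type) [TopologicalSpace X] (A : Set X) (k : ℕ) : Prop :=
  ∃ V : Fin k → Set X, (∀ i, IsOpen (V i)) ∧ A ⊆ ⋃ i, V i ∧
    ∀ i, NullhomotopicIn X (V i)

/-- `cat_X(A)`, the Lusternik–Schnirelmann category of `A` in `X`. -/
noncomputable def catSet (X : Type) [TopologicalSpace X] (A : Set X) : ℕ :=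
  sInf {k | CatLE X A k}

/-- `cat(X)`, the Lusternik–Schnirelmann category of `X`. -/
noncomputable def catSpace (X : Type) [TopologicalSpace X] : ℕ :=
  catSet X Set.univ

namespace ClosedOneForm

/-- `cat(X, ω)`: the minimal `k` such that for every `N > 0` there is a closed
subset `A ⊆ X`, `N`-movable with respect to `ω`, with `cat_X(X − A) ≤ k`. -/
noncomputable def catForm {X : Type} [TopologicalSpace X] (ω : ClosedOneForm X) : ℕ :=
  sInf {k | ∀ N : ℝ, 0 < N →
    ∃ A : Set X, IsClosed A ∧ ω.NMovable A N ∧ CatLE X Aᶜ k}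

end ClosedOneForm

namespace ClosedOneForm

variable {X Y : Type} [TopologicalSpace X] [TopologicalSpace Y]

/-- The pullback `φ*ω` of a closed 1-form along a continuous map `φ : Y → X`,
given by the cover `{φ⁻¹(U)}` and the functions `f_U ∘ φ`. -/
def pullback (ω : ClosedOneForm X) (φ : Y → X) (hφ : Continuous φ) :
    ClosedOneForm Y where
  ι := ω.ι
  U i := φ ⁻¹' ω.U i
  isOpen i := (ω.isOpen i).preimage hφ
  covers y := ω.covers (φ y)
  f i := ω.f i ∘ φ
  cont i := (ω.cont i).comp hφ.continuousOn (fun _ h => h)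
  locConst := by
    intro i j y hy
    obtain ⟨W, hWo, hxW, hW⟩ := ω.locConst i j (φ y) hy
    exact ⟨φ ⁻¹' W, hWo.preimage hφ, hxW, fun z hz => hW (φ z) hz⟩

/-- The sum `ω₁ + ω₂` of two closed 1-forms on `X`, given on the common
refinement of the two covers by the sums of the local functions. -/
def add (ω₁ ω₂ : ClosedOneForm X) : ClosedOneForm X where
  ι := ω₁.ι × ω₂.ι
  U p := ω₁.U p.1 ∩ ω₂.U p.2
  isOpen p := (ω₁.isOpen p.1).inter (ω₂.isOpen p.2)
  covers x := by
    obtain ⟨i, hi⟩ := ω₁.covers x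
    obtain ⟨j, hj⟩ := ω₂.covers x
    exact ⟨(i, j), hi, hj⟩
  f p x := ω₁.f p.1 x + ω₂.f p.2 x
  cont p := ((ω₁.cont p.1).mono Set.inter_subset_left).add
    ((ω₂.cont p.2).mono Set.inter_subset_right)
  locConst := by
    intro p q x hx
    obtain ⟨W₁, h1o, h1x, h1⟩ := ω₁.locConst p.1 q.1 x ⟨hx.1.1, hx.2.1⟩
    obtain ⟨W₂, h2o, h2x, h2⟩ := ω₂.locConst p.2 q.2 x ⟨hx.1.2, hx.2.2⟩
    refine ⟨W₁ ∩ W₂, h1o.inter h2o, ⟨h1x, h2x⟩, fun y hy => ?_⟩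
    have e1 := h1 y ⟨hy.1.1, hy.2.1.1, hy.2.2.1⟩
    have e2 := h2 y ⟨hy.1.2, hy.2.1.2, hy.2.2.2⟩
    try dsimp only at e1 e2 ⊢
    linarith

/-- The closed 1-form `ω + dg` obtained from `ω` by adding the differential of
a continuous function `g : X → ℝ`, i.e. adding `g|_U` to each local function. -/
def addFun (ω : ClosedOneForm X) (g : X → ℝ) (hg : Continuous g) :
    ClosedOneForm X where
  ι := ω.ι
  U := ω.U
  isOpen := ω.isOpen
  covers := ω.covers
  f i x := ω.f i x + g x
  cont i := (ω.cont i).add hg.continuousOn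
  locConst := by
    intro i j x hx
    obtain ⟨W, hWo, hWx, hW⟩ := ω.locConst i j x hx
    refine ⟨W, hWo, hWx, fun y hy => ?_⟩
    have := hW y hy
    try dsimp only at this ⊢
    linarith

end ClosedOneForm

namespace ClosedOneForm

variable {X : Type} [TopologicalSpace X]

/-- `IsPathIntegral` with the number of segments made explicit. -/
def IsPIn (ω : ClosedOneForm X) (γ : ℝ → X) (a b r : ℝ) (n : ℕ) : Prop :=
  ∃ (t : ℕ → ℝ) (idx : ℕ → ω.ι),
    t 0 = a ∧ t n = b ∧ (∀ m < n, t m ≤ t (m + 1)) ∧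
    (∀ m < n, ∀ s ∈ Set.Icc (t m) (t (m + 1)), γ s ∈ ω.U (idx m)) ∧
    r = ∑ m ∈ Finset.range n, (ω.f (idx m) (γ (t (m + 1))) - ω.f (idx m) (γ (t m)))

theorem isPathIntegral_iff_exists_isPIn (ω : ClosedOneForm X) (γ : ℝ → X) (a b r : ℝ) :
    ω.IsPathIntegral γ a b r ↔ ∃ n, ω.IsPIn γ a b r n := by
  constructor
  · rintro ⟨n, t, idx, h⟩; exact ⟨n, t, idx, h⟩
  · rintro ⟨n, t, idx, h⟩; exact ⟨n, t, idx, h⟩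

/-- chain monotonicity of partition points -/
theorem chain_mono {n : ℕ} {t : ℕ → ℝ} (hm : ∀ m < n, t m ≤ t (m + 1)) :
    ∀ k l, k ≤ l → l ≤ n → t k ≤ t l := by
  intro k l hkl hln
  induction l with
  | zero => simp_all
  | succ l ih =>
    rcases Nat.eq_or_lt_of_le hkl with h | h
    · exact le_of_eq (by rw [h])
    · exact le_trans (ih (Nat.lt_succ_iff.mp h) (le_trans (Nat.le_succ l) hln))
        (hm l (Nat.lt_of_succ_le hln))

theorem isPIn_self_eq_zero {ω : ClosedOneForm X} {γ : ℝ → X} {a r : ℝ} {n : ℕ}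
    (h : ω.IsPIn γ a a r n) : r = 0 := by
  obtain ⟨t, idx, h0, hn, hm, _, hsum⟩ := h
  have hconst : ∀ k, k ≤ n → t k = a := by
    intro k hk
    have h1 : t 0 ≤ t k := chain_mono hm 0 k (Nat.zero_le _) hk
    have h2 : t k ≤ t n := chain_mono hm k n hk le_rfl
    rw [h0] at h1; rw [hn] at h2; linarith
  rw [hsum]
  apply Finset.sum_eq_zero
  intro m hm'
  have hm'' := Finset.mem_range.mp hm'
  rw [hconst m (le_of_lt hm''), hconst (m+1) hm'']
  ring

/-- locally constant difference along a path segment -/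
theorem locConst_path (ω : ClosedOneForm X) (i j : ω.ι) (γ : ℝ → X) {u v : ℝ}
    (huv : u ≤ v) (hc : ContinuousOn γ (Icc u v))
    (hU : ∀ s ∈ Icc u v, γ s ∈ ω.U i ∩ ω.U j) :
    ω.f i (γ v) - ω.f j (γ v) = ω.f i (γ u) - ω.f j (γ u) := by
  set d : ↥(Icc u v) → ℝ := fun s => ω.f i (γ s.1) - ω.f j (γ s.1) with hd
  have hlc : IsLocallyConstant d := by
    rw [IsLocallyConstant.iff_exists_open]
    rintro ⟨s, hs⟩
    obtain ⟨W, hWo, hWx, hW⟩ := ω.locConst i j (γ s) (hU s hs)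
    obtain ⟨O, hOo, hO⟩ := (continuousOn_iff'.mp hc) W hWo
    refine ⟨Subtype.val ⁻¹' O, hOo.preimage continuous_subtype_val, ?_, ?_⟩
    · have : s ∈ γ ⁻¹' W ∩ Icc u v := ⟨hWx, hs⟩
      rw [hO] at this; exact this.1
    · rintro ⟨y, hy⟩ hyO
      have : y ∈ γ ⁻¹' W ∩ Icc u v := by rw [hO]; exact ⟨hyO, hy⟩
      exact hW (γ y) ⟨this.1, hU y hy⟩
  haveI : PreconnectedSpace ↥(Icc u v) := Subtype.preconnectedSpace isPreconnected_Icc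
  exact hlc.apply_eq_of_preconnectedSpace ⟨v, right_mem_Icc.mpr huv⟩ ⟨u, left_mem_Icc.mpr huv⟩


/-- One-sided step of the uniqueness proof: assuming `t 1 ≤ t' 1`. -/
theorem uniq_key {m : ℕ} (ω : ClosedOneForm X)
    (IH : ∀ n n', n + n' ≤ m → ∀ (γ : ℝ → X) (a b r r' : ℝ), a ≤ b →
      ContinuousOn γ (Icc a b) → ω.IsPIn γ a b r n → ω.IsPIn γ a b r' n' → r = r')
    {p q : ℕ} (hpq : (p + 1) + (q + 1) ≤ m + 1)
    (γ : ℝ → X) (a b r r' : ℝ) (hab : a ≤ b) (hcont : ContinuousOn γ (Icc a b))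
    (t : ℕ → ℝ) (idx : ℕ → ω.ι)
    (ht0 : t 0 = a) (htn : t (p+1) = b) (htm : ∀ k < p+1, t k ≤ t (k+1))
    (htU : ∀ k < p+1, ∀ s ∈ Icc (t k) (t (k+1)), γ s ∈ ω.U (idx k))
    (hsum : r = ∑ k ∈ Finset.range (p+1), (ω.f (idx k) (γ (t (k+1))) - ω.f (idx k) (γ (t k))))
    (t' : ℕ → ℝ) (idx' : ℕ → ω.ι)
    (ht0' : t' 0 = a) (htn' : t' (q+1) = b) (htm' : ∀ k < q+1, t' k ≤ t' (k+1))
    (htU' : ∀ k < q+1, ∀ s ∈ Icc (t' k) (t' (k+1)), γ s ∈ ω.U (idx' k))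
    (hsum' : r' = ∑ k ∈ Finset.range (q+1), (ω.f (idx' k) (γ (t' (k+1))) - ω.f (idx' k) (γ (t' k))))
    (h11 : t 1 ≤ t' 1) : r = r' := by
  have hat1 : a ≤ t 1 := by rw [← ht0]; exact htm 0 (Nat.succ_pos p)
  have ht1b : t 1 ≤ b := by rw [← htn]; exact chain_mono htm 1 (p+1) (Nat.one_le_iff_ne_zero.mpr (Nat.succ_ne_zero p)) le_rfl
  have hat1' : a ≤ t' 1 := by rw [← ht0']; exact htm' 0 (Nat.succ_pos q)
  -- the two first-segment contributions agree
  have hfirst : ω.f (idx 0) (γ (t 1)) - ω.f (idx 0) (γ a)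
      = ω.f (idx' 0) (γ (t 1)) - ω.f (idx' 0) (γ a) := by
    have hB := ω.locConst_path (idx 0) (idx' 0) γ hat1
      (hcont.mono (Icc_subset_Icc le_rfl ht1b))
      (fun s hs => ⟨by
        have := htU 0 (Nat.succ_pos p); rw [ht0] at this; exact this s hs, by
        have := htU' 0 (Nat.succ_pos q); rw [ht0'] at this
        exact this s ⟨hs.1, le_trans hs.2 h11⟩⟩)
    rw [← ht0] at hB ⊢
    linarith [hB]
  -- tail of the first partition
  have hP2 : ω.IsPIn γ (t 1) b (r - (ω.f (idx 0) (γ (t 1)) - ω.f (idx 0) (γ a))) p := by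
    refine ⟨fun k => t (k+1), fun k => idx (k+1), rfl, htn, fun k hk => htm (k+1) (by omega),
      fun k hk => htU (k+1) (by omega), ?_⟩
    have := Finset.sum_range_succ' (fun k => ω.f (idx k) (γ (t (k+1))) - ω.f (idx k) (γ (t k))) p
    rw [hsum, this, ht0]
    ring
  -- split the first segment of the second partition at `t 1`
  have hP2' : ω.IsPIn γ (t 1) b (r' - (ω.f (idx' 0) (γ (t 1)) - ω.f (idx' 0) (γ a))) (q+1) := by
    refine ⟨fun k => if k = 0 then t 1 else t' k, idx', by simp, by simp [htn'], ?_, ?_, ?_⟩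
    · intro k hk
      rcases Nat.eq_zero_or_pos k with h0 | h0
      · subst h0; simpa using h11
      · have h1 : k ≠ 0 := Nat.pos_iff_ne_zero.mp h0
        simp only [h1, if_false, Nat.succ_ne_zero, if_neg (Nat.succ_ne_zero k)]
        exact htm' k hk
    · intro k hk s hs
      rcases Nat.eq_zero_or_pos k with h0 | h0
      · subst h0
        simp only [if_pos rfl, if_neg (Nat.succ_ne_zero 0)] at hs
        refine htU' 0 (Nat.succ_pos q) s ⟨?_, hs.2⟩
        rw [ht0']; exact le_trans hat1 hs.1
      · have h1 : k ≠ 0 := Nat.pos_iff_ne_zero.mp h0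
        simp only [h1, if_false, if_neg (Nat.succ_ne_zero k)] at hs
        exact htU' k hk s hs
    · have e1 := Finset.sum_range_succ' (fun k => ω.f (idx' k)
        (γ (if k+1 = 0 then t 1 else t' (k+1))) - ω.f (idx' k) (γ (if k = 0 then t 1 else t' k))) q
      rw [e1, hsum', Finset.sum_range_succ'
        (fun k => ω.f (idx' k) (γ (t' (k+1))) - ω.f (idx' k) (γ (t' k))), ht0']
      simp only [Nat.succ_ne_zero, if_false, if_pos rfl, if_true]
      ring
  have hrec := IH p (q+1) (by omega) γ (t 1) b _ _ ht1b
    (hcont.mono (Icc_subset_Icc hat1 le_rfl)) hP2 hP2'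
  linarith [hrec, hfirst]

theorem isPIn_unique (ω : ClosedOneForm X) :
    ∀ (m n n' : ℕ), n + n' ≤ m → ∀ (γ : ℝ → X) (a b r r' : ℝ), a ≤ b →
      ContinuousOn γ (Icc a b) → ω.IsPIn γ a b r n → ω.IsPIn γ a b r' n' → r = r' := by
  intro m
  induction m with
  | zero =>
    intro n n' hnn γ a b r r' _ _ hP hP'
    have hn : n = 0 := by omega
    have hn' : n' = 0 := by omega
    subst hn; subst hn'
    obtain ⟨t, idx, _, _, _, _, hsum⟩ := hP
    obtain ⟨t', idx', _, _, _, _, hsum'⟩ := hP'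
    simp at hsum hsum'; rw [hsum, hsum']
  | succ m IH =>
    intro n n' hnn γ a b r r' hab hcont hP hP'
    rcases Nat.eq_zero_or_pos n with h0 | h0
    · subst h0
      have hba : b = a := by
        obtain ⟨t, idx, h1, h2, _⟩ := hP; rw [← h2, h1]
      subst hba
      have h1 : r = 0 := isPIn_self_eq_zero hP
      have h2 : r' = 0 := isPIn_self_eq_zero hP'
      rw [h1, h2]
    rcases Nat.eq_zero_or_pos n' with h0' | h0'
    · subst h0'
      have hba : b = a := by
        obtain ⟨t', idx', h1, h2, _⟩ := hP'; rw [← h2, h1]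
      subst hba
      have h1 : r = 0 := isPIn_self_eq_zero hP
      have h2 : r' = 0 := isPIn_self_eq_zero hP'
      rw [h1, h2]
    obtain ⟨p, rfl⟩ : ∃ p, n = p + 1 := ⟨n - 1, by omega⟩
    obtain ⟨q, rfl⟩ : ∃ q, n' = q + 1 := ⟨n' - 1, by omega⟩
    obtain ⟨t, idx, ht0, htn, htm, htU, hsum⟩ := hP
    obtain ⟨t', idx', ht0', htn', htm', htU', hsum'⟩ := hP'
    rcases le_total (t 1) (t' 1) with h11 | h11
    · exact ω.uniq_key IH hnn γ a b r r' hab hcont t idx ht0 htn htm htU hsum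
        t' idx' ht0' htn' htm' htU' hsum' h11
    · exact (ω.uniq_key IH (by omega) γ a b r' r hab hcont t' idx' ht0' htn' htm' htU' hsum'
        t idx ht0 htn htm htU hsum h11).symm

/-- Uniqueness of the value of the path integral over a continuous path. -/
theorem isPathIntegral_unique (ω : ClosedOneForm X) {γ : ℝ → X} {a b r r' : ℝ} (hab : a ≤ b)
    (hcont : ContinuousOn γ (Icc a b)) (h : ω.IsPathIntegral γ a b r)
    (h' : ω.IsPathIntegral γ a b r') : r = r' := by
  obtain ⟨n, hn⟩ := (ω.isPathIntegral_iff_exists_isPIn γ a b r).mp h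
  obtain ⟨n', hn'⟩ := (ω.isPathIntegral_iff_exists_isPIn γ a b r').mp h'
  exact ω.isPIn_unique (n + n') n n' le_rfl γ a b r r' hab hcont hn hn'


section ProductForm

variable {X₁ X₂ : Type} [TopologicalSpace X₁] [TopologicalSpace X₂]

/-- Any value of the product form over a horizontal path is a value of `ω₁` over
its first component. -/
theorem prod_proj (ω₁ : ClosedOneForm X₁) (ω₂ : ClosedOneForm X₂)
    (γ₁ : ℝ → X₁) (x₂ : X₂) (a b r : ℝ)
    (h : ((ω₁.pullback (Prod.fst : X₁ × X₂ → X₁) continuous_fst).add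
      (ω₂.pullback (Prod.snd : X₁ × X₂ → X₂) continuous_snd)).IsPathIntegral
      (fun t => (γ₁ t, x₂)) a b r) :
    ω₁.IsPathIntegral γ₁ a b r := by
  obtain ⟨n, t, idx, h0, hn, hm, hU, hsum⟩ := h
  refine ⟨n, t, fun k => (idx k).1, h0, hn, hm, ?_, ?_⟩
  · intro m hm' s hs
    exact (hU m hm' s hs).1
  · rw [hsum]
    apply Finset.sum_congr rfl
    intro k _
    show (ω₁.f (idx k).1 (γ₁ (t (k+1))) + ω₂.f (idx k).2 x₂)
      - (ω₁.f (idx k).1 (γ₁ (t k)) + ω₂.f (idx k).2 x₂) = _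
    ring

/-- Any value of `ω₁` over `γ₁` is a value of the product form over the
corresponding horizontal path. -/
theorem prod_lift (ω₁ : ClosedOneForm X₁) (ω₂ : ClosedOneForm X₂)
    (γ₁ : ℝ → X₁) (x₂ : X₂) (a b r : ℝ)
    (h : ω₁.IsPathIntegral γ₁ a b r) :
    ((ω₁.pullback (Prod.fst : X₁ × X₂ → X₁) continuous_fst).add
      (ω₂.pullback (Prod.snd : X₁ × X₂ → X₂) continuous_snd)).IsPathIntegral
      (fun t => (γ₁ t, x₂)) a b r := by
  obtain ⟨j, hj⟩ := ω₂.covers x₂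
  obtain ⟨n, t, idx, h0, hn, hm, hU, hsum⟩ := h
  refine ⟨n, t, fun k => (idx k, j), h0, hn, hm, ?_, ?_⟩
  · intro m hm' s hs
    exact ⟨hU m hm' s hs, hj⟩
  · rw [hsum]
    apply Finset.sum_congr rfl
    intro k _
    show _ = (ω₁.f (idx k) (γ₁ (t (k+1))) + ω₂.f j x₂)
      - (ω₁.f (idx k) (γ₁ (t k)) + ω₂.f j x₂)
    ring

/-- transfer of the path integral bound to the product. -/
theorem prod_pathIntegral_le (ω₁ : ClosedOneForm X₁) (ω₂ : ClosedOneForm X₂)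
    (γ₁ : ℝ → X₁) (x₂ : X₂) (N : ℝ) (hN : 0 < N)
    (hcont : ContinuousOn γ₁ (Icc (0:ℝ) 1))
    (h : ω₁.pathIntegral γ₁ 0 1 ≤ -N) :
    ((ω₁.pullback (Prod.fst : X₁ × X₂ → X₁) continuous_fst).add
      (ω₂.pullback (Prod.snd : X₁ × X₂ → X₂) continuous_snd)).pathIntegral
      (fun t => (γ₁ t, x₂)) 0 1 ≤ -N := by
  set ω := (ω₁.pullback (Prod.fst : X₁ × X₂ → X₁) continuous_fst).add
      (ω₂.pullback (Prod.snd : X₁ × X₂ → X₂) continuous_snd) with hω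
  have hNe₁ : ∃ r, ω₁.IsPathIntegral γ₁ 0 1 r := by
    by_contra hc
    rw [pathIntegral, dif_neg hc] at h
    linarith
  have hval₁ : ω₁.pathIntegral γ₁ 0 1 = hNe₁.choose := by
    rw [pathIntegral, dif_pos hNe₁]
  have hNe : ∃ r, ω.IsPathIntegral (fun t => (γ₁ t, x₂)) 0 1 r :=
    ⟨hNe₁.choose, prod_lift ω₁ ω₂ γ₁ x₂ 0 1 _ hNe₁.choose_spec⟩
  rw [pathIntegral, dif_pos hNe]
  have hproj : ω₁.IsPathIntegral γ₁ 0 1 hNe.choose :=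
    prod_proj ω₁ ω₂ γ₁ x₂ 0 1 _ hNe.choose_spec
  have := ω₁.isPathIntegral_unique (by norm_num : (0:ℝ) ≤ 1) hcont hproj hNe₁.choose_spec
  rw [hval₁] at h
  linarith

end ProductForm

end ClosedOneForm

/-- A finite CW structure on a (compact Hausdorff) topological space `X`:
finitely many cells, each given by a characteristic map from the closed unit
ball of a Euclidean space, continuous on the closed ball, injective on the
open ball, whose restriction to the boundary sphere lands in cells of strictly
lower dimension, and such that the images of the open balls partition `X`. -/
structure FinCW (X : Type) [TopologicalSpace X] where
  /-- number of cells -/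
  n : ℕ
  /-- dimension of each cell -/
  dim : Fin n → ℕ
  /-- characteristic map of each cell -/
  φ : (i : Fin n) → EuclideanSpace ℝ (Fin (dim i)) → X
  cont : ∀ i, ContinuousOn (φ i) (Metric.closedBall 0 1)
  injOn : ∀ i, Set.InjOn (φ i) (Metric.ball 0 1)
  sphere_lt : ∀ i, ∀ x ∈ Metric.sphere (0 : EuclideanSpace ℝ (Fin (dim i))) 1,
    ∃ j, dim j < dim i ∧ φ i x ∈ φ j '' Metric.ball 0 1
  partition : ∀ x : X, ∃! p : (i : Fin n) × EuclideanSpace ℝ (Fin (dim i)),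
    p.2 ∈ Metric.ball 0 1 ∧ φ p.1 p.2 = x

/-- The Euler characteristic `χ(X) = Σ_i (−1)^i c_i` of a finite CW structure,
where `c_i` is the number of cells of dimension `i`. -/
def FinCW.euler {X : Type} [TopologicalSpace X] (c : FinCW X) : ℤ :=
  ∑ i : Fin c.n, (-1 : ℤ) ^ (c.dim i)

namespace FinCWCat

variable {X : Type} [TopologicalSpace X] [T2Space X] [CompactSpace X]

/-- The per-cell test maps `closedBall × ℝ → X × ℝ`. -/
def Qmap (c : FinCW X) (j : Fin c.n) :
    ↥(Metric.closedBall (0 : EuclideanSpace ℝ (Fin (c.dim j))) 1) × ℝ → X × ℝ :=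
  fun p => (c.φ j p.1.1, p.2)

theorem continuous_Qmap (c : FinCW X) (j : Fin c.n) : Continuous (Qmap c j) := by
  refine Continuous.prodMk ?_ continuous_snd
  exact (continuousOn_iff_continuous_restrict.mp (c.cont j)).comp
    (continuous_subtype_val.fst'.subtype_mk _)

/-- X × ℝ carries the topology coinduced by the cell maps. -/
theorem isOpen_of_forall_cell (c : FinCW X) (S : Set (X × ℝ))
    (h : ∀ j : Fin c.n, IsOpen (Qmap c j ⁻¹' S)) : IsOpen S := by
  classical
  set T := (j : Fin c.n) × ↥(Metric.closedBall (0 : EuclideanSpace ℝ (Fin (c.dim j))) 1) with hT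
  haveI : ∀ j : Fin c.n, CompactSpace
      ↥(Metric.closedBall (0 : EuclideanSpace ℝ (Fin (c.dim j))) 1) :=
    fun j => isCompact_iff_compactSpace.mp (isCompact_closedBall _ _)
  set q : T → X := fun p => c.φ p.1 p.2.1 with hq
  have hqc : Continuous q := by
    apply continuous_sigma
    intro j
    exact (continuousOn_iff_continuous_restrict.mp (c.cont j))
  have hqs : Function.Surjective q := by
    intro x
    obtain ⟨⟨j, b⟩, ⟨hb, hbx⟩, -⟩ := c.partition x
    exact ⟨⟨j, ⟨b, Metric.ball_subset_closedBall hb⟩⟩, hbx⟩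
  set Q : T × ℝ → X × ℝ := Prod.map q id with hQ
  have hQp : IsProperMap Q := (hqc.isProperMap).prodMap isProperMap_id
  have hQs : Function.Surjective Q := Function.Surjective.prodMap hqs Function.surjective_id
  have hquot : Topology.IsQuotientMap Q :=
    hQp.isClosedMap.isQuotientMap (hqc.prodMap continuous_id) hQs
  rw [← hquot.isOpen_preimage]
  set σ := (Homeomorph.sigmaProdDistrib (Y := ℝ)
    (X := fun j : Fin c.n => ↥(Metric.closedBall (0 : EuclideanSpace ℝ (Fin (c.dim j))) 1))).symm
  rw [← Homeomorph.isOpen_preimage σ]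
  rw [isOpen_sigma_iff]
  intro j
  convert h j using 1
  rfl

/-- Uniqueness of cell representations. -/
theorem rep_unique (c : FinCW X) {j j' : Fin c.n}
    {b : EuclideanSpace ℝ (Fin (c.dim j))} {b' : EuclideanSpace ℝ (Fin (c.dim j'))}
    (hb : b ∈ Metric.ball 0 1) (hb' : b' ∈ Metric.ball 0 1)
    (h : c.φ j b = c.φ j' b') :
    (⟨j, b⟩ : (i : Fin c.n) × EuclideanSpace ℝ (Fin (c.dim i))) = ⟨j', b'⟩ := by
  obtain ⟨p, -, hup⟩ := c.partition (c.φ j b)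
  have h1 := hup ⟨j, b⟩ ⟨hb, rfl⟩
  have h2 := hup ⟨j', b'⟩ ⟨hb', h.symm⟩
  rw [h1, h2]

theorem rep_unique_fst (c : FinCW X) {j j' : Fin c.n}
    {b : EuclideanSpace ℝ (Fin (c.dim j))} {b' : EuclideanSpace ℝ (Fin (c.dim j'))}
    (hb : b ∈ Metric.ball 0 1) (hb' : b' ∈ Metric.ball 0 1)
    (h : c.φ j b = c.φ j' b') : j = j' :=
  congrArg Sigma.fst (rep_unique c hb hb' h)

/-- The image of the boundary sphere of any cell avoids the open cell of maximal
dimension. -/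
theorem sphere_not_mem_top (c : FinCW X) {i : Fin c.n} (hmax : ∀ k, c.dim k ≤ c.dim i)
    (j : Fin c.n) {b : EuclideanSpace ℝ (Fin (c.dim j))}
    (hb : b ∈ Metric.sphere 0 1) :
    c.φ j b ∉ c.φ i '' Metric.ball 0 1 := by
  rintro ⟨bi, hbi, hei⟩
  obtain ⟨k, hk, bk, hbk, hebk⟩ := c.sphere_lt j b hb
  have hki : k = i := rep_unique_fst c hbk hbi (hebk.trans hei.symm)
  rw [hki] at hk
  exact absurd (hmax j) (not_le.mpr hk)

/-- Points of other cells avoid the top open cell. -/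
theorem notmem_top (c : FinCW X) {i : Fin c.n} (hmax : ∀ k, c.dim k ≤ c.dim i)
    {j : Fin c.n} (hj : j ≠ i) {b : EuclideanSpace ℝ (Fin (c.dim j))}
    (hb : b ∈ Metric.closedBall 0 1) :
    c.φ j b ∉ c.φ i '' Metric.ball 0 1 := by
  rcases lt_or_eq_of_le (Metric.mem_closedBall.mp hb) with h | h
  · rintro ⟨bi, hbi, hei⟩
    exact hj (rep_unique_fst c (Metric.mem_ball.mpr h) hbi hei.symm)
  · exact sphere_not_mem_top c hmax j (Metric.mem_sphere.mpr h)

/-- The top open cell is open. -/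
theorem isOpen_top_cell (c : FinCW X) {i : Fin c.n} (hmax : ∀ k, c.dim k ≤ c.dim i) :
    IsOpen (c.φ i '' Metric.ball 0 1) := by
  have hcompl : (c.φ i '' Metric.ball 0 1)ᶜ
      = ⋃ j : {j : Fin c.n // j ≠ i}, c.φ j.1 '' Metric.closedBall 0 1 := by
    ext x
    constructor
    · intro hx
      obtain ⟨⟨j, b⟩, ⟨hb, hbx⟩, -⟩ := c.partition x
      have hj : j ≠ i := by
        rintro rfl
        exact hx ⟨b, hb, hbx⟩
      exact mem_iUnion.mpr ⟨⟨j, hj⟩, ⟨b, Metric.ball_subset_closedBall hb, hbx⟩⟩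
    · intro hx
      obtain ⟨⟨j, hj⟩, b, hb, hbx⟩ := mem_iUnion.mp hx
      rw [← hbx]
      exact notmem_top c hmax hj hb
  rw [← isClosed_compl_iff, ← compl_compl (c.φ i '' Metric.ball 0 1), compl_compl, hcompl]
  exact isClosed_iUnion_of_finite fun j =>
    ((isCompact_closedBall _ _).image_of_continuousOn (c.cont j.1)).isClosed

/-! ### clamping -/

/-- clamp to [0,1] -/
noncomputable def cl (t : ℝ) : ℝ := max 0 (min 1 t)

theorem continuous_cl : Continuous cl := by
  unfold cl; fun_prop

theorem cl_mem (t : ℝ) : cl t ∈ Icc (0:ℝ) 1 := by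
  constructor
  · exact le_max_left _ _
  · rcases le_total 1 t with h | h <;>
      unfold cl <;> rcases le_total 1 t with h' | h' <;>
      rcases le_total t 0 with h'' | h'' <;>
      simp [min_def, max_def] <;> split_ifs <;> linarith

theorem cl_zero : cl 0 = 0 := by norm_num [cl]
theorem cl_one : cl 1 = 1 := by norm_num [cl]

open scoped Classical in
/-- local inverse of the characteristic map on an open cell -/
noncomputable def Φ (c : FinCW X) (i : Fin c.n) (x : X) : EuclideanSpace ℝ (Fin (c.dim i)) :=
  if h : ∃ b ∈ Metric.ball (0 : EuclideanSpace ℝ (Fin (c.dim i))) 1, c.φ i b = x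
  then h.choose else 0

theorem Φ_spec (c : FinCW X) (i : Fin c.n) {b : EuclideanSpace ℝ (Fin (c.dim i))}
    (hb : b ∈ Metric.ball 0 1) : Φ c i (c.φ i b) = b := by
  have h : ∃ b' ∈ Metric.ball (0 : EuclideanSpace ℝ (Fin (c.dim i))) 1,
      c.φ i b' = c.φ i b := ⟨b, hb, rfl⟩
  rw [Φ, dif_pos h]
  exact c.injOn i h.choose_spec.1 hb h.choose_spec.2

/-- The top open cell is nullhomotopic in `X` (contract radially to the center). -/
theorem nullhomotopic_top_cell (c : FinCW X) {i : Fin c.n} (hmax : ∀ k, c.dim k ≤ c.dim i) :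
    NullhomotopicIn X (c.φ i '' Metric.ball 0 1) := by
  classical
  set B := c.φ i '' Metric.ball 0 1 with hB
  set C : X × ℝ → X := fun p => c.φ i ((1 - cl p.2) • Φ c i p.1) with hC
  have hmem : ∀ (b : EuclideanSpace ℝ (Fin (c.dim i))), b ∈ Metric.closedBall 0 1 →
      ∀ t : ℝ, (1 - cl t) • b ∈ Metric.closedBall (0 : EuclideanSpace ℝ (Fin (c.dim i))) 1 := by
    intro b hb t
    rw [mem_closedBall_zero_iff] at hb ⊢
    rw [norm_smul]
    have h1 := cl_mem t
    have : |1 - cl t| ≤ 1 := by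
      rw [abs_le]; constructor <;> [linarith [h1.2]; linarith [h1.1]]
    calc |1 - cl t| * ‖b‖ ≤ 1 * 1 := by
          apply mul_le_mul this hb (norm_nonneg b) zero_le_one
      _ = 1 := by ring
  refine ⟨C, c.φ i 0, ?_, ?_, ?_⟩
  · -- continuity
    have hBopen : IsOpen (B ×ˢ (univ : Set ℝ)) := (isOpen_top_cell c hmax).prod isOpen_univ
    have hmain : ContinuousOn C (B ×ˢ (univ : Set ℝ)) := by
      rw [continuousOn_open_iff hBopen]
      intro O hO
      apply isOpen_of_forall_cell c
      intro j
      by_cases hji : j = i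
      · subst hji
        set g : ↥(Metric.closedBall (0 : EuclideanSpace ℝ (Fin (c.dim j))) 1) × ℝ → X :=
          fun p => c.φ j ((1 - cl p.2) • p.1.1) with hg
        have hgc : Continuous g := by
          apply (c.cont j).comp_continuous
          · exact Continuous.smul ((continuous_const.sub (continuous_cl.comp continuous_snd)))
              continuous_subtype_val.fst'
          · exact fun p => hmem p.1.1 p.1.2 p.2
        have heq : Qmap c j ⁻¹' (B ×ˢ (univ : Set ℝ) ∩ C ⁻¹' O)
            = {p : ↥(Metric.closedBall (0 : EuclideanSpace ℝ (Fin (c.dim j))) 1) × ℝ |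
                p.1.1 ∈ Metric.ball 0 1} ∩ g ⁻¹' O := by
          ext ⟨⟨b, hbcb⟩, t⟩
          simp only [Qmap, mem_inter_iff, mem_preimage, mem_prod, mem_univ, and_true,
            mem_setOf_eq]
          constructor
          · rintro ⟨hbB, hCO⟩
            have hball : b ∈ Metric.ball (0 : EuclideanSpace ℝ (Fin (c.dim j))) 1 := by
              rcases lt_or_eq_of_le (Metric.mem_closedBall.mp hbcb) with h | h
              · exact Metric.mem_ball.mpr h
              · exact absurd hbB (sphere_not_mem_top c hmax j (Metric.mem_sphere.mpr h))
            refine ⟨hball, ?_⟩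
            have : C (c.φ j b, t) = g (⟨b, hbcb⟩, t) := by
              simp only [hC, hg, Φ_spec c j hball]
            rwa [this] at hCO
          · rintro ⟨hball, hgO⟩
            refine ⟨⟨b, hball, rfl⟩, ?_⟩
            have : C (c.φ j b, t) = g (⟨b, hbcb⟩, t) := by
              simp only [hC, hg, Φ_spec c j hball]
            rwa [this]
        rw [heq]
        exact ((isOpen_induced Metric.isOpen_ball).preimage continuous_fst).inter
          (hO.preimage hgc)
      · have heq : Qmap c j ⁻¹' (B ×ˢ (univ : Set ℝ) ∩ C ⁻¹' O) = ∅ := by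
          ext ⟨⟨b, hbcb⟩, t⟩
          simp only [Qmap, mem_inter_iff, mem_preimage, mem_prod, mem_univ, and_true,
            mem_empty_iff_false, iff_false, not_and]
          intro hbB
          exact absurd hbB (notmem_top c hmax hji hbcb)
        rw [heq]
        exact isOpen_empty
    exact hmain.mono (prod_mono_right (subset_univ _))
  · intro v hv
    obtain ⟨b, hb, rfl⟩ := hv
    rw [hC]
    simp only [cl_zero, sub_zero, one_smul, Φ_spec c i hb]
  · intro v hv
    obtain ⟨b, hb, rfl⟩ := hv
    rw [hC]
    simp only [cl_one, sub_self, zero_smul]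

/-! ### projection onto the closed unit ball -/

noncomputable def projE {d : ℕ} (b : EuclideanSpace ℝ (Fin d)) : EuclideanSpace ℝ (Fin d) :=
  (max 1 ‖b‖)⁻¹ • b

theorem projE_mem {d : ℕ} (b : EuclideanSpace ℝ (Fin d)) :
    projE b ∈ Metric.closedBall (0 : EuclideanSpace ℝ (Fin d)) 1 := by
  rw [mem_closedBall_zero_iff, projE, norm_smul, norm_inv]
  have h1 : (0:ℝ) < max 1 ‖b‖ := lt_of_lt_of_le one_pos (le_max_left _ _)
  rw [Real.norm_eq_abs, abs_of_pos h1]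
  rw [inv_mul_le_iff₀ h1, mul_one]
  exact le_max_right _ _

theorem projE_id {d : ℕ} {b : EuclideanSpace ℝ (Fin d)} (hb : ‖b‖ ≤ 1) :
    projE b = b := by
  rw [projE, max_eq_left hb, inv_one, one_smul]

theorem projE_id' {d : ℕ} {b : EuclideanSpace ℝ (Fin d)}
    (hb : b ∈ Metric.closedBall (0 : EuclideanSpace ℝ (Fin d)) 1) : projE b = b :=
  projE_id (mem_closedBall_zero_iff.mp hb)

/-! ### the subcomplex obtained by deleting a top-dimensional open cell -/

section Subcomplex

variable (c : FinCW X) {m : ℕ} (hm : c.n = m + 1) (i : Fin c.n)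
  (hmax : ∀ k, c.dim k ≤ c.dim i)

/-- enumeration of the cells other than `i` -/
def cellEmb (l : Fin m) : Fin c.n := Fin.cast hm.symm ((Fin.cast hm i).succAbove l)

theorem cellEmb_ne (l : Fin m) : cellEmb c hm i l ≠ i := by
  intro h
  apply Fin.succAbove_ne (Fin.cast hm i) l
  apply Fin.ext
  have := congrArg Fin.val h
  simpa [cellEmb] using this

theorem cellEmb_inj : Function.Injective (cellEmb c hm i) := by
  intro l l' h
  apply Fin.succAbove_right_injective (p := Fin.cast hm i)
  apply Fin.ext
  have := congrArg Fin.val h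
  simpa [cellEmb] using this

theorem cellEmb_surj {j : Fin c.n} (hj : j ≠ i) : ∃ l, cellEmb c hm i l = j := by
  have hne : Fin.cast hm j ≠ Fin.cast hm i := by
    intro h; apply hj; apply Fin.ext; have := congrArg Fin.val h; simpa using this
  obtain ⟨l, hl⟩ := Fin.exists_succAbove_eq hne
  refine ⟨l, ?_⟩
  apply Fin.ext
  have := congrArg Fin.val hl
  simpa [cellEmb] using this

/-- the complement of the top open cell as a finite CW complex -/
noncomputable def subFinCW : FinCW ↥((c.φ i '' Metric.ball 0 1)ᶜ) where
  n := m
  dim l := c.dim (cellEmb c hm i l)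
  φ l b := ⟨c.φ (cellEmb c hm i l) (projE b),
    notmem_top c hmax (cellEmb_ne c hm i l) (projE_mem b)⟩
  cont l := by
    rw [continuousOn_iff_continuous_restrict]
    apply Continuous.subtype_mk
    apply Continuous.congr (f := fun b : ↥(Metric.closedBall
        (0 : EuclideanSpace ℝ (Fin (c.dim (cellEmb c hm i l)))) 1) =>
        c.φ (cellEmb c hm i l) b.1)
    · exact continuousOn_iff_continuous_restrict.mp (c.cont _)
    · intro b
      rw [projE_id' b.2]
  injOn l := by
    intro b hb b' hb' h
    have h' := congrArg Subtype.val h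
    simp only at h'
    rw [projE_id' (Metric.ball_subset_closedBall hb),
      projE_id' (Metric.ball_subset_closedBall hb')] at h'
    exact c.injOn _ hb hb' h'
  sphere_lt l b hb := by
    obtain ⟨k, hk, bk, hbk, hebk⟩ := c.sphere_lt (cellEmb c hm i l) b hb
    have hki : k ≠ i := by
      intro h
      rw [h] at hk
      exact absurd (hmax (cellEmb c hm i l)) (not_le.mpr hk)
    obtain ⟨l', rfl⟩ := cellEmb_surj c hm i hki
    refine ⟨l', hk, bk, hbk, ?_⟩
    apply Subtype.ext
    simp only
    rw [projE_id' (Metric.ball_subset_closedBall hbk),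
      projE_id' (Metric.sphere_subset_closedBall hb)]
    exact hebk
  partition x := by
    obtain ⟨⟨j, b⟩, ⟨hb, hbx⟩, hu⟩ := c.partition x.1
    have hji : j ≠ i := by
      rintro rfl
      exact absurd ⟨b, hb, hbx⟩ x.2
    obtain ⟨l, rfl⟩ := cellEmb_surj c hm i hji
    refine ⟨⟨l, b⟩, ⟨hb, ?_⟩, ?_⟩
    · apply Subtype.ext
      simp only
      rw [projE_id' (Metric.ball_subset_closedBall hb)]
      exact hbx
    · rintro ⟨l', b'⟩ ⟨hb', hx'⟩
      have h' := congrArg Subtype.val hx'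
      simp only at h'
      rw [projE_id' (Metric.ball_subset_closedBall hb')] at h'
      have hsig := hu ⟨cellEmb c hm i l', b'⟩ ⟨hb', h'⟩
      have hl : l' = l := cellEmb_inj c hm i (congrArg Sigma.fst hsig)
      subst hl
      have hbb : b' = b := eq_of_heq (Sigma.mk.inj_iff.mp hsig).2
      subst hbb
      rfl

theorem subFinCW_n : (subFinCW c hm i hmax).n = m := rfl

end Subcomplex

/-! ### pasting lemma for `ContinuousOn` -/

theorem continuousOn_union_closed {α β : Type*} [TopologicalSpace α] [TopologicalSpace β]
    {f : α → β} {s C₁ C₂ : Set α} (hC₁ : IsClosed C₁) (hC₂ : IsClosed C₂)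
    (hcover : s ⊆ C₁ ∪ C₂) (h₁ : ContinuousOn f (s ∩ C₁)) (h₂ : ContinuousOn f (s ∩ C₂)) :
    ContinuousOn f s := by
  intro x hx
  by_cases hx1 : x ∈ C₁ <;> by_cases hx2 : x ∈ C₂
  · exact (ContinuousWithinAt.union (h₁ x ⟨hx, hx1⟩) (h₂ x ⟨hx, hx2⟩)).mono
      (fun y hy => (hcover hy).elim (fun h => Or.inl ⟨hy, h⟩) (fun h => Or.inr ⟨hy, h⟩))
  · refine (continuousWithinAt_inter (hC₂.isOpen_compl.mem_nhds hx2)).mp ?_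
    exact (h₁ x ⟨hx, hx1⟩).mono
      (fun y hy => ⟨hy.1, (hcover hy.1).resolve_right hy.2⟩)
  · refine (continuousWithinAt_inter (hC₁.isOpen_compl.mem_nhds hx1)).mp ?_
    exact (h₂ x ⟨hx, hx2⟩).mono
      (fun y hy => ⟨hy.1, (hcover hy.1).resolve_left hy.2⟩)
  · exact absurd (hcover hx) (by simp [hx1, hx2])

/-! ### the radial retraction off the center of the top cell -/

section Retraction

variable (c : FinCW X) (i : Fin c.n)

/-- radial expansion in the ball -/
noncomputable def ρ (t : ℝ) {d : ℕ} (b : EuclideanSpace ℝ (Fin d)) : EuclideanSpace ℝ (Fin d) :=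
  ((1 - t) + t * ‖b‖⁻¹) • b

theorem ρ_zero {d : ℕ} (b : EuclideanSpace ℝ (Fin d)) : ρ 0 b = b := by
  rw [ρ]; norm_num

theorem ρ_norm_one {d : ℕ} {b : EuclideanSpace ℝ (Fin d)} (hb : ‖b‖ = 1) (t : ℝ) :
    ρ t b = b := by
  rw [ρ, hb]; norm_num

theorem ρ_mem {d : ℕ} {b : EuclideanSpace ℝ (Fin d)} (hb : ‖b‖ ≤ 1) (hb0 : b ≠ 0)
    {t : ℝ} (ht : t ∈ Icc (0:ℝ) 1) : ρ t b ∈ Metric.closedBall (0 : EuclideanSpace ℝ (Fin d)) 1 := by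
  have hbn : (0:ℝ) < ‖b‖ := norm_pos_iff.mpr hb0
  rw [mem_closedBall_zero_iff, ρ, norm_smul, Real.norm_eq_abs]
  have hc : (0:ℝ) ≤ (1 - t) + t * ‖b‖⁻¹ := by
    have : (0:ℝ) ≤ t * ‖b‖⁻¹ := mul_nonneg ht.1 (inv_nonneg.mpr (le_of_lt hbn))
    linarith [ht.2]
  rw [abs_of_nonneg hc, add_mul, mul_assoc, inv_mul_cancel₀ (ne_of_gt hbn), mul_one]
  nlinarith [ht.1, ht.2, hbn]

theorem ρ_norm_eq_one {d : ℕ} {b : EuclideanSpace ℝ (Fin d)} (hb0 : b ≠ 0) :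
    ‖ρ 1 b‖ = 1 := by
  have hbn : (0:ℝ) < ‖b‖ := norm_pos_iff.mpr hb0
  rw [ρ, norm_smul, Real.norm_eq_abs]
  simp only [sub_self, one_mul, zero_add]
  rw [abs_of_nonneg (inv_nonneg.mpr (le_of_lt hbn)), inv_mul_cancel₀ (ne_of_gt hbn)]

open scoped Classical in
/-- the homotopy pushing the punctured top cell radially to its boundary -/
noncomputable def Rh : X × ℝ → X := fun p =>
  if p.1 ∈ c.φ i '' Metric.ball 0 1 \ {c.φ i 0}
  then c.φ i (ρ (cl p.2) (Φ c i p.1)) else p.1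

theorem Rh_zero (x : X) : Rh c i (x, 0) = x := by
  rw [Rh]
  split_ifs with h
  · obtain ⟨⟨b, hb, rfl⟩, -⟩ := h
    rw [Φ_spec c i hb, cl_zero, ρ_zero]
  · rfl

theorem Rh_one_mem (hmax : ∀ k, c.dim k ≤ c.dim i) {x : X} (hx : x ≠ c.φ i 0) :
    Rh c i (x, 1) ∈ (c.φ i '' Metric.ball 0 1)ᶜ := by
  rw [Rh]
  split_ifs with h
  · obtain ⟨⟨b, hb, rfl⟩, hne⟩ := h
    rw [Φ_spec c i hb, cl_one]
    have hb0 : b ≠ 0 := by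
      rintro rfl
      exact hx rfl
    exact sphere_not_mem_top c hmax i (by
      rw [Metric.mem_sphere, dist_zero_right]; exact ρ_norm_eq_one hb0)
  · intro hx'
    exact h ⟨hx', hx⟩

theorem Rh_continuousOn (hmax : ∀ k, c.dim k ≤ c.dim i) :
    ContinuousOn (Rh c i) (({c.φ i 0}ᶜ : Set X) ×ˢ (univ : Set ℝ)) := by
  have hYo : IsOpen (({c.φ i 0}ᶜ : Set X) ×ˢ (univ : Set ℝ)) :=
    (isOpen_compl_singleton).prod isOpen_univ
  rw [continuousOn_open_iff hYo]
  intro O hO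
  apply isOpen_of_forall_cell c
  intro j
  by_cases hji : j = i
  · subst hji
    set S : Set (↥(Metric.closedBall (0 : EuclideanSpace ℝ (Fin (c.dim j))) 1) × ℝ) :=
      {p | c.φ j p.1.1 ≠ c.φ j 0} with hS
    have hg0 : Continuous fun p : ↥(Metric.closedBall
        (0 : EuclideanSpace ℝ (Fin (c.dim j))) 1) × ℝ => c.φ j p.1.1 :=
      (continuousOn_iff_continuous_restrict.mp (c.cont j)).comp
        (continuous_subtype_val.fst'.subtype_mk _)
    have hSopen : IsOpen S := isOpen_compl_singleton.preimage hg0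
    have hSne : ∀ p ∈ S, p.1.1 ≠ 0 := by
      rintro ⟨⟨b, hb⟩, t⟩ hp rfl
      exact hp rfl
    set g : ↥(Metric.closedBall (0 : EuclideanSpace ℝ (Fin (c.dim j))) 1) × ℝ → X :=
      fun p => c.φ j (ρ (cl p.2) p.1.1) with hg
    have hgc : ContinuousOn g S := by
      have hinner : ContinuousOn (fun p : ↥(Metric.closedBall
          (0 : EuclideanSpace ℝ (Fin (c.dim j))) 1) × ℝ => ρ (cl p.2) p.1.1) S := by
        apply ContinuousOn.fun_smul
        · apply ContinuousOn.add
          · exact (continuous_const.sub (continuous_cl.comp continuous_snd)).continuousOn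
          · exact ((continuous_cl.comp continuous_snd).continuousOn).mul
              (((continuous_norm.comp continuous_subtype_val.fst').continuousOn).inv₀
                (fun p hp => norm_ne_zero_iff.mpr (hSne p hp)))
        · exact continuous_subtype_val.fst'.continuousOn
      apply (c.cont j).comp hinner
      intro p hp
      exact ρ_mem (mem_closedBall_zero_iff.mp p.1.2) (hSne p hp) (cl_mem p.2)
    have heq : Qmap c j ⁻¹' (({c.φ j 0}ᶜ : Set X) ×ˢ (univ : Set ℝ) ∩ Rh c j ⁻¹' O)
        = S ∩ g ⁻¹' O := by
      ext ⟨⟨b, hbcb⟩, t⟩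
      simp only [Qmap, mem_inter_iff, mem_preimage, mem_prod, mem_univ, and_true,
        mem_compl_iff, mem_singleton_iff, hS, mem_setOf_eq, hg]
      constructor
      · rintro ⟨hne, hRO⟩
        refine ⟨hne, ?_⟩
        have hre : Rh c j (c.φ j b, t) = c.φ j (ρ (cl t) b) := by
          rw [Rh]
          split_ifs with h
          · obtain ⟨⟨b', hb', he'⟩, -⟩ := h
            have hbball : b ∈ Metric.ball (0 : EuclideanSpace ℝ (Fin (c.dim j))) 1 := by
              rcases lt_or_eq_of_le (Metric.mem_closedBall.mp hbcb) with hlt | hsp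
              · exact Metric.mem_ball.mpr hlt
              · exact absurd ⟨b', hb', he'⟩
                  (sphere_not_mem_top c hmax j (Metric.mem_sphere.mpr hsp))
            rw [Φ_spec c j hbball]
          · have hsp : ‖b‖ = 1 := by
              rcases lt_or_eq_of_le (Metric.mem_closedBall.mp hbcb) with hlt | hsp
              · exact absurd ⟨⟨b, Metric.mem_ball.mpr hlt, rfl⟩, hne⟩ h
              · rw [← dist_zero_right]; exact hsp
            rw [ρ_norm_one hsp]
        rwa [hre] at hRO
      · rintro ⟨hne, hgO⟩
        refine ⟨hne, ?_⟩
        have hre : Rh c j (c.φ j b, t) = c.φ j (ρ (cl t) b) := by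
          rw [Rh]
          split_ifs with h
          · obtain ⟨⟨b', hb', he'⟩, -⟩ := h
            have hbball : b ∈ Metric.ball (0 : EuclideanSpace ℝ (Fin (c.dim j))) 1 := by
              rcases lt_or_eq_of_le (Metric.mem_closedBall.mp hbcb) with hlt | hsp
              · exact Metric.mem_ball.mpr hlt
              · exact absurd ⟨b', hb', he'⟩
                  (sphere_not_mem_top c hmax j (Metric.mem_sphere.mpr hsp))
            rw [Φ_spec c j hbball]
          · have hsp : ‖b‖ = 1 := by
              rcases lt_or_eq_of_le (Metric.mem_closedBall.mp hbcb) with hlt | hsp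
              · exact absurd ⟨⟨b, Metric.mem_ball.mpr hlt, rfl⟩, hne⟩ h
              · rw [← dist_zero_right]; exact hsp
            rw [ρ_norm_one hsp]
        rwa [hre]
    rw [heq]
    exact hgc.isOpen_inter_preimage hSopen hO
  · set g : ↥(Metric.closedBall (0 : EuclideanSpace ℝ (Fin (c.dim j))) 1) × ℝ → X :=
      fun p => c.φ j p.1.1 with hg
    have hgc : Continuous g :=
      (continuousOn_iff_continuous_restrict.mp (c.cont j)).comp
        (continuous_subtype_val.fst'.subtype_mk _)
    have hnotB : ∀ (b : ↥(Metric.closedBall (0 : EuclideanSpace ℝ (Fin (c.dim j))) 1))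
        (t : ℝ), Rh c i (c.φ j b.1, t) = c.φ j b.1 := by
      intro b t
      rw [Rh, if_neg]
      rintro ⟨hB, -⟩
      exact notmem_top c hmax hji b.2 hB
    have heq : Qmap c j ⁻¹' (({c.φ i 0}ᶜ : Set X) ×ˢ (univ : Set ℝ) ∩ Rh c i ⁻¹' O)
        = g ⁻¹' ({c.φ i 0}ᶜ) ∩ g ⁻¹' O := by
      ext ⟨⟨b, hbcb⟩, t⟩
      simp only [Qmap, mem_inter_iff, mem_preimage, mem_prod, mem_univ, and_true,
        mem_compl_iff, mem_singleton_iff, hg, hnotB]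
      rw [hnotB ⟨b, hbcb⟩ t]
    rw [heq]
    exact (hgc.isOpen_preimage _ (isOpen_compl_singleton)).inter (hO.preimage hgc)

end Retraction

/-! ### the inductive step -/

theorem cat_step (c : FinCW X) (i : Fin c.n) (hmax : ∀ k, c.dim k ≤ c.dim i)
    {k' : ℕ} (hcat' : CatLE ↥((c.φ i '' Metric.ball 0 1)ᶜ) univ k') :
    CatLE X univ (k' + 1) := by
  classical
  set B := c.φ i '' Metric.ball 0 1 with hB
  set Yset : Set X := {c.φ i 0}ᶜ with hYset
  obtain ⟨V', hV'open, hV'cover, hV'null⟩ := hcat'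
  -- realize the open sets of the subspace as preimages of open sets of X
  have hO : ∀ l, ∃ O : Set X, IsOpen O ∧ Subtype.val ⁻¹' O = V' l := by
    intro l
    exact isOpen_induced_iff.mp (hV'open l)
  choose O hOopen hOeq using hO
  -- continuity of the end of the retraction
  have hrcont : ContinuousOn (fun x => Rh c i (x, 1)) Yset := by
    apply (Rh_continuousOn c i hmax).comp
      (Continuous.continuousOn (by fun_prop))
    intro x hx
    exact ⟨hx, mem_univ _⟩
  set V : Fin k' → Set X := fun l => Yset ∩ (fun x => Rh c i (x, 1)) ⁻¹' (O l) with hV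
  have hVopen : ∀ l, IsOpen (V l) :=
    fun l => hrcont.isOpen_inter_preimage isOpen_compl_singleton (hOopen l)
  have hVY : ∀ l, V l ⊆ Yset := fun l => inter_subset_left
  have hVmem : ∀ l, ∀ x ∈ V l, ∀ h : Rh c i (x, 1) ∈ Bᶜ, (⟨Rh c i (x, 1), h⟩ : ↥(Bᶜ)) ∈ V' l := by
    intro l x hx h
    rw [← hOeq l]
    exact hx.2
  refine ⟨Fin.cons B V, ?_, ?_, ?_⟩
  · intro l
    refine Fin.cases ?_ ?_ l
    · exact isOpen_top_cell c hmax
    · intro l'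
      simpa using hVopen l'
  · intro x _
    by_cases hx : x = c.φ i 0
    · refine mem_iUnion.mpr ⟨0, ?_⟩
      simp only [Fin.cons_zero]
      exact ⟨0, by simp [Metric.mem_ball], hx.symm⟩
    · have hmem : Rh c i (x, 1) ∈ Bᶜ := Rh_one_mem c i hmax hx
      have : (⟨Rh c i (x, 1), hmem⟩ : ↥(Bᶜ)) ∈ ⋃ l, V' l := hV'cover (mem_univ _)
      obtain ⟨l, hl⟩ := mem_iUnion.mp this
      refine mem_iUnion.mpr ⟨l.succ, ?_⟩
      simp only [Fin.cons_succ]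
      refine ⟨hx, ?_⟩
      rw [← hOeq l] at hl
      exact hl
  · intro l
    refine Fin.cases ?_ ?_ l
    · simpa using nullhomotopic_top_cell c hmax
    · intro l'
      obtain ⟨H', x₀, hH'cont, hH'0, hH'1⟩ := hV'null l'
      set rS : X → ↥(Bᶜ) := fun x =>
        if h : Rh c i (x, 1) ∈ Bᶜ then ⟨Rh c i (x, 1), h⟩ else x₀ with hrS
      have hYne : ∀ x, x ∈ Yset → x ≠ c.φ i 0 := fun x hx => hx
      have hrSmem : ∀ x (hx : x ∈ Yset),
          rS x = ⟨Rh c i (x, 1), Rh_one_mem c i hmax (hYne x hx)⟩ := by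
        intro x hx
        rw [hrS]
        exact dif_pos _
      have hrScont : ContinuousOn rS Yset := by
        rw [continuousOn_iff_continuous_restrict]
        have h1 : Continuous (Yset.restrict (fun x => Rh c i (x, 1))) :=
          continuousOn_iff_continuous_restrict.mp hrcont
        have h2 : Continuous fun x : ↥Yset =>
            (⟨Rh c i (x.1, 1), Rh_one_mem c i hmax (hYne x.1 x.2)⟩ : ↥(Bᶜ)) :=
          h1.subtype_mk _
        apply h2.congr
        intro x
        rw [Set.restrict_apply, hrSmem x.1 x.2]
      set Hl : X × ℝ → X := fun p =>
        if p.2 ≤ 1/2 then Rh c i (p.1, 2 * p.2) else (H' (rS p.1, 2 * p.2 - 1)).1 with hHl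
      simp only [Fin.cons_succ]
      refine ⟨Hl, x₀.1, ?_, ?_, ?_⟩
      · -- continuity of the concatenated homotopy
        apply continuousOn_union_closed (C₁ := {p : X × ℝ | p.2 ≤ 1/2})
          (C₂ := {p : X × ℝ | 1/2 ≤ p.2})
          (isClosed_le continuous_snd continuous_const)
          (isClosed_le continuous_const continuous_snd)
          (fun p _ => le_total p.2 (1/2))
        · -- first half
          have hcong : ∀ p ∈ (V l' ×ˢ Icc (0:ℝ) 1) ∩ {p : X × ℝ | p.2 ≤ 1/2},
              Hl p = Rh c i (p.1, 2 * p.2) := by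
            intro p hp
            rw [hHl]
            exact if_pos hp.2
          apply ContinuousOn.congr _ hcong
          apply (Rh_continuousOn c i hmax).comp (by fun_prop : Continuous
            fun p : X × ℝ => (p.1, 2 * p.2)).continuousOn
          rintro ⟨x, t⟩ ⟨⟨hx, -⟩, -⟩
          exact ⟨hVY l' hx, mem_univ _⟩
        · -- second half
          have hmemV' : ∀ p : X × ℝ, p.1 ∈ V l' → rS p.1 ∈ V' l' := by
            intro p hp
            rw [hrSmem p.1 (hVY l' hp)]
            exact hVmem l' p.1 hp _
          have hcong : ∀ p ∈ (V l' ×ˢ Icc (0:ℝ) 1) ∩ {p : X × ℝ | 1/2 ≤ p.2},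
              Hl p = (H' (rS p.1, 2 * p.2 - 1)).1 := by
            rintro ⟨x, t⟩ ⟨⟨hx, ht⟩, ht2⟩
            rw [hHl]
            simp only
            split_ifs with h
            · have ht12 : t = 1/2 := le_antisymm h ht2
              have e1 : 2 * t = 1 := by rw [ht12]; norm_num
              have e2 : 2 * t - 1 = 0 := by rw [e1]; ring
              rw [e2, e1, hH'0 (rS x) (hmemV' (x, t) hx), hrSmem x (hVY l' hx)]
            · rfl
          apply ContinuousOn.congr _ hcong
          apply continuous_subtype_val.comp_continuousOn
          apply hH'cont.comp
          · apply ContinuousOn.prodMk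
            · exact hrScont.comp continuous_fst.continuousOn
                (fun p hp => hVY l' hp.1.1)
            · exact (by fun_prop : Continuous fun p : X × ℝ => 2 * p.2 - 1).continuousOn
          · rintro ⟨x, t⟩ ⟨⟨hx, ht⟩, ht2⟩
            constructor
            · exact hmemV' (x, t) hx
            · have ht2' : (1:ℝ)/2 ≤ t := ht2
              simp only [mem_Icc] at ht ⊢
              constructor <;> [linarith; linarith [ht.2]]
      · -- starts at the identity
        intro v hv
        rw [hHl]
        simp only
        rw [if_pos (by norm_num : (0:ℝ) ≤ 1/2)]
        rw [mul_zero, Rh_zero]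
      · -- ends at the basepoint
        intro v hv
        rw [hHl]
        simp only
        rw [if_neg (by norm_num : ¬ (1:ℝ) ≤ 1/2)]
        have e1 : 2 * (1:ℝ) - 1 = 1 := by norm_num
        rw [e1, hH'1 (rS v) (by
          rw [hrSmem v (hVY l' hv)]
          exact hVmem l' v hv _)]

end FinCWCat

/-- **Finite CW complexes have finite Lusternik–Schnirelmann category.** -/
theorem FinCW.exists_catLE :
    ∀ (N : ℕ) (X : Type) [TopologicalSpace X] [T2Space X] [CompactSpace X]
      (c : FinCW X), c.n = N → ∃ k, CatLE X univ k := by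
  intro N
  induction N with
  | zero =>
    intro X _ _ _ c hc
    refine ⟨0, Fin.elim0, fun l => l.elim0, ?_, fun l => l.elim0⟩
    intro x _
    obtain ⟨⟨j, b⟩, -, -⟩ := c.partition x
    exact Fin.elim0 (hc ▸ j)
  | succ N IH =>
    intro X _ _ _ c hc
    haveI : Nonempty (Fin c.n) := by rw [hc]; infer_instance
    obtain ⟨i, hmax⟩ := Finite.exists_max c.dim
    have hX' : IsClosed ((c.φ i '' Metric.ball 0 1)ᶜ) :=
      (FinCWCat.isOpen_top_cell c hmax).isClosed_compl
    haveI : CompactSpace ↥((c.φ i '' Metric.ball 0 1)ᶜ) :=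
      isCompact_iff_compactSpace.mp (hX'.isCompact)
    obtain ⟨k', hk'⟩ := IH ↥((c.φ i '' Metric.ball 0 1)ᶜ)
      (FinCWCat.subFinCW c hc i hmax) rfl
    exact ⟨k' + 1, FinCWCat.cat_step c i hmax hk'⟩


/-- **Pairs of category zero form an ideal.**  Let `X₁`, `X₂` be finite
connected CW complexes with continuous closed 1-forms `ω₁`, `ω₂`, and let
`ω = p₁*ω₁ + p₂*ω₂` on `X₁ × X₂`.  If `cat(X₁, ω₁) = 0` then
`cat(X₁ × X₂, ω) = 0`. -/
theorem catForm_product_zero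
    (X₁ X₂ : Type) [TopologicalSpace X₁] [TopologicalSpace X₂]
    [T2Space X₁] [T2Space X₂] [CompactSpace X₁] [CompactSpace X₂]
    [ConnectedSpace X₁] [ConnectedSpace X₂]
    (c₁ : FinCW X₁) (c₂ : FinCW X₂)
    (ω₁ : ClosedOneForm X₁) (ω₂ : ClosedOneForm X₂)
    (h : ω₁.catForm = 0) :
    (((ω₁.pullback (Prod.fst : X₁ × X₂ → X₁) continuous_fst)).add
      (ω₂.pullback (Prod.snd : X₁ × X₂ → X₂) continuous_snd)).catForm = 0 := by
  classical
  rw [ClosedOneForm.catForm] at h ⊢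
  rw [Nat.sInf_eq_zero]
  rcases Nat.sInf_eq_zero.mp h with h0 | hemp
  · left
    intro N hN
    obtain ⟨A₁, hA₁closed, ⟨H₁, hH₁cont, hH₁0, hH₁int⟩, hcat0⟩ := h0 N hN
    have hA₁univ : A₁ = univ := by
      obtain ⟨V, -, hsub, -⟩ := hcat0
      rw [eq_univ_iff_forall]
      intro x
      by_contra hx
      obtain ⟨l, -⟩ := mem_iUnion.mp (hsub hx)
      exact l.elim0
    rw [hA₁univ] at hH₁cont hH₁0 hH₁int
    refine ⟨univ, isClosed_univ, ?_, ?_⟩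
    · refine ⟨fun p => (H₁ (p.1.1, p.2), p.1.2), ?_, ?_, ?_⟩
      · apply ContinuousOn.prodMk
        · apply hH₁cont.comp
            (by fun_prop : Continuous fun p : (X₁ × X₂) × ℝ => (p.1.1, p.2)).continuousOn
          rintro ⟨⟨x₁, x₂⟩, t⟩ ⟨-, ht⟩
          exact ⟨mem_univ _, ht⟩
        · exact (continuous_snd.comp continuous_fst).continuousOn
      · rintro ⟨x₁, x₂⟩ -
        simp only
        rw [hH₁0 x₁ (mem_univ _)]
      · rintro ⟨x₁, x₂⟩ -
        have hint := hH₁int x₁ (mem_univ _)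
        have hcont1 : ContinuousOn (fun t => H₁ (x₁, t)) (Icc 0 1) := by
          apply hH₁cont.comp
            (by fun_prop : Continuous fun t : ℝ => ((x₁ : X₁), t)).continuousOn
          intro t ht
          exact ⟨mem_univ _, ht⟩
        exact ClosedOneForm.prod_pathIntegral_le ω₁ ω₂ (fun t => H₁ (x₁, t)) x₂ N hN
          hcont1 hint
    · rw [compl_univ]
      exact ⟨Fin.elim0, fun l => l.elim0, by simp, fun l => l.elim0⟩
  · exfalso
    obtain ⟨k, hk⟩ := FinCW.exists_catLE c₁.n X₁ c₁ rfl
    have hmem : k ∈ {k | ∀ N : ℝ, 0 < N →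
        ∃ A : Set X₁, IsClosed A ∧ ω₁.NMovable A N ∧ CatLE X₁ Aᶜ k} := by
      intro N hN
      refine ⟨∅, isClosed_empty, ?_, ?_⟩
      · refine ⟨fun p => p.1, ?_, ?_, ?_⟩
        · rw [Set.empty_prod]
          exact continuousOn_empty _
        · intro a ha
          exact absurd ha (notMem_empty a)
        · intro a ha
          exact absurd ha (notMem_empty a)
      · rw [compl_empty]
        exact hk
    rw [hemp] at hmem
    exact hmem
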